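/- Let M ≥ 2 be an integer and d ∈ ℤ. Let θ̃₀ : ℝ → ℝ be the 2π-periodic function such that for every ω ∈ [0, 2π), θ̃₀(ω) = (d + 1/2)(M − 1)ω − ⌊Mω/(2π)⌋·π, and for ω ≥ 0 let β(ω) := ∑_{i=1}^{∞} θ̃₀(ω/M^{i}) (this series converges). Let α̃ : ℝ → ℝ be the 2π/M-periodic function such that for every ω ∈ [0, 2π/M), α̃(ω) = π/2 − (d + 1/2)Mω. Then for every ω > 0, α̃(ω/M) + β(ω) ≡ π/2 (mod 2π). -/

import Mathlib

open Real

private lemma theta_formula (M : ℕ) (hM : 2 ≤ M) (d : ℤ) (θ₀ : ℝ → ℝ)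
    (hper : ∀ ω : ℝ, θ₀ (ω + 2 * π) = θ₀ ω)
    (hval : ∀ ω : ℝ, 0 ≤ ω → ω < 2 * π →
      θ₀ ω = ((d : ℝ) + 1 / 2) * ((M : ℝ) - 1) * ω - (⌊(M : ℝ) * ω / (2 * π)⌋ : ℝ) * π)
    (x : ℝ) (hx : 0 ≤ x) :
    θ₀ x = ((d : ℝ) + 1 / 2) * ((M : ℝ) - 1) * x - (⌊(M : ℝ) * x / (2 * π)⌋ : ℝ) * π
      + (⌊x / (2 * π)⌋ : ℝ) * π - 2 * π * (d : ℝ) * ((M : ℝ) - 1) * (⌊x / (2 * π)⌋ : ℝ) := by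
  have hπ : (0:ℝ) < 2 * π := by positivity
  set n : ℤ := ⌊x / (2 * π)⌋ with hn
  set r : ℝ := x - n * (2 * π) with hrdef
  have hfr : r = (2 * π) * Int.fract (x / (2 * π)) := by
    rw [Int.fract, hrdef]
    field_simp
    ring
  have hr0 : 0 ≤ r := by
    rw [hfr]; exact mul_nonneg hπ.le (Int.fract_nonneg _)
  have hr2 : r < 2 * π := by
    rw [hfr]
    calc (2 * π) * Int.fract (x / (2 * π)) < (2 * π) * 1 :=
          (mul_lt_mul_iff_right₀ hπ).mpr (Int.fract_lt_one _)
      _ = 2 * π := mul_one _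
  have hθ : θ₀ x = θ₀ r := (Function.Periodic.sub_int_mul_eq hper n).symm
  have hfloor : ⌊(M : ℝ) * r / (2 * π)⌋ = ⌊(M : ℝ) * x / (2 * π)⌋ - (M : ℤ) * n := by
    have h1 : (M : ℝ) * r / (2 * π) = (M : ℝ) * x / (2 * π) - (((M : ℤ) * n : ℤ) : ℝ) := by
      push_cast
      rw [hrdef]
      field_simp
    rw [h1, Int.floor_sub_intCast]
  rw [hθ, hval r hr0 hr2, hfloor, hrdef]
  push_cast
  ring

theorem stmt_5 (M : ℕ) (hM : 2 ≤ M) (d : ℤ) (θ₀ α : ℝ → ℝ)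
    (hper : ∀ ω : ℝ, θ₀ (ω + 2 * π) = θ₀ ω)
    (hval : ∀ ω : ℝ, 0 ≤ ω → ω < 2 * π →
      θ₀ ω = ((d : ℝ) + 1 / 2) * ((M : ℝ) - 1) * ω - (⌊(M : ℝ) * ω / (2 * π)⌋ : ℝ) * π)
    (hαper : ∀ ω : ℝ, α (ω + 2 * π / M) = α ω)
    (hαval : ∀ ω : ℝ, 0 ≤ ω → ω < 2 * π / M →
      α ω = π / 2 - ((d : ℝ) + 1 / 2) * M * ω) :
    (∀ ω : ℝ, 0 ≤ ω → Summable (fun i : ℕ => θ₀ (ω / (M : ℝ) ^ (i + 1)))) ∧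
    (∀ ω : ℝ, 0 < ω →
      ∃ n : ℤ, α (ω / M) + (∑' i : ℕ, θ₀ (ω / (M : ℝ) ^ (i + 1)))
        = π / 2 + 2 * π * n) := by
  have hπ : (0:ℝ) < π := pi_pos
  have hM1 : (1:ℝ) < (M:ℝ) := by exact_mod_cast lt_of_lt_of_le one_lt_two hM
  have hM0 : (0:ℝ) < (M:ℝ) := lt_trans one_pos hM1
  have hMne : (M:ℝ) ≠ 0 := ne_of_gt hM0
  have hM1ne : (M:ℝ) - 1 ≠ 0 := by linarith
  set c : ℝ := (d : ℝ) + 1 / 2 with hc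
  -- main computation for any ω ≥ 0
  have main : ∀ ω : ℝ, 0 ≤ ω →
      Summable (fun i : ℕ => θ₀ (ω / (M : ℝ) ^ (i + 1))) ∧
      ∃ K : ℤ, (∑' i : ℕ, θ₀ (ω / (M : ℝ) ^ (i + 1)))
        = c * ω - π * (⌊ω / (2 * π)⌋ : ℝ) - 2 * π * d * ((M : ℝ) - 1) * (K : ℝ) := by
    intro ω hω
    set N : ℕ → ℤ := fun j => ⌊ω / (2 * π * (M:ℝ) ^ j)⌋ with hN
    set a : ℕ → ℝ := fun i => c * ((M:ℝ) - 1) * (ω / (M:ℝ) ^ (i + 1)) with ha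
    set b : ℕ → ℝ := fun i =>
      (-(N i : ℝ) * π + (N (i+1) : ℝ) * π) - 2 * π * d * ((M:ℝ) - 1) * (N (i+1) : ℝ) with hb
    have hfi : ∀ i : ℕ, θ₀ (ω / (M : ℝ) ^ (i + 1)) = a i + b i := by
      intro i
      have hx : (0:ℝ) ≤ ω / (M:ℝ) ^ (i + 1) := by positivity
      have h1 : (M:ℝ) * (ω / (M:ℝ) ^ (i + 1)) / (2 * π) = ω / (2 * π * (M:ℝ) ^ i) := by
        rw [pow_succ]
        field_simp
      have h2 : (ω / (M:ℝ) ^ (i + 1)) / (2 * π) = ω / (2 * π * (M:ℝ) ^ (i + 1)) := by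
        rw [div_div, mul_comm]
      rw [theta_formula M hM d θ₀ hper hval _ hx, h1, h2, ha, hb, hN]
      ring
    -- summability and sum of a
    set r : ℝ := ((M:ℝ))⁻¹ with hr
    have hr0 : 0 ≤ r := by positivity
    have hr1 : r < 1 := by
      rw [hr, inv_lt_one_iff₀]; right; exact hM1
    have hrne : 1 - r ≠ 0 := by
      have : r < 1 := hr1; linarith
    have haeq : ∀ i, a i = (c * ((M:ℝ) - 1) * ω * r) * r ^ i := by
      intro i
      show c * ((M:ℝ) - 1) * (ω / (M:ℝ) ^ (i + 1))
        = c * ((M:ℝ) - 1) * ω * ((M:ℝ))⁻¹ * ((M:ℝ))⁻¹ ^ i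
      rw [div_eq_mul_inv, ← inv_pow, pow_succ]
      ring
    have hsa : Summable a := by
      rw [funext haeq]
      exact (summable_geometric_of_lt_one hr0 hr1).mul_left _
    have htsa : ∑' i, a i = c * ω := by
      rw [funext haeq, tsum_mul_left, tsum_geometric_of_lt_one hr0 hr1]
      rw [hr]
      field_simp
    -- b has finite support
    obtain ⟨I, hI⟩ := pow_unbounded_of_one_lt (ω / (2 * π)) hM1
    have hNzero : ∀ j : ℕ, I ≤ j → N j = 0 := by
      intro j hj
      rw [hN]
      apply Int.floor_eq_zero_iff.mpr
      constructor
      · positivity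
      · rw [div_lt_one (by positivity)]
        have h1 : ω < 2 * π * (M:ℝ) ^ I := by
          rw [div_lt_iff₀ (by positivity)] at hI
          linarith [hI]
        have h2 : (M:ℝ) ^ I ≤ (M:ℝ) ^ j := pow_le_pow_right₀ hM1.le hj
        nlinarith [h2, pi_pos]
    have hbzero : ∀ j ∉ Finset.range I, b j = 0 := by
      intro j hj
      rw [Finset.mem_range, not_lt] at hj
      rw [hb]
      simp [hNzero j hj, hNzero (j+1) (le_trans hj (Nat.le_succ _))]
    have hsb : Summable b := summable_of_ne_finset_zero hbzero
    refine ⟨by rw [funext hfi]; exact hsa.add hsb, ?_⟩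
    refine ⟨∑ j ∈ Finset.range I, N (j + 1), ?_⟩
    rw [funext hfi, hsa.tsum_add hsb, htsa, tsum_eq_sum hbzero]
    have hbsplit : ∀ j : ℕ, b j = ((N (j+1) : ℝ) * π - (N j : ℝ) * π)
        + (-(2 * π * d * ((M:ℝ) - 1))) * (N (j+1) : ℝ) := by
      intro j; rw [hb]; ring
    rw [funext hbsplit, Finset.sum_add_distrib, Finset.sum_range_sub (fun j => (N j : ℝ) * π),
      ← Finset.mul_sum, hNzero I le_rfl]
    have hN0 : ((N 0 : ℤ) : ℝ) = ((⌊ω / (2 * π)⌋ : ℤ) : ℝ) := by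
      rw [hN]; norm_num
    rw [hN0]
    push_cast
    ring
  refine ⟨fun ω hω => (main ω hω).1, fun ω hω => ?_⟩
  obtain ⟨K, hK⟩ := (main ω hω.le).2
  -- compute α (ω / M)
  set m : ℤ := ⌊ω / (2 * π)⌋ with hm
  have hper' : Function.Periodic α (2 * π / M) := hαper
  set s : ℝ := ω / M - m * (2 * π / M) with hs
  have hfs : s = (2 * π / M) * Int.fract (ω / (2 * π)) := by
    rw [Int.fract, hs, hm]
    field_simp
  have hs0 : 0 ≤ s := by
    rw [hfs]; exact mul_nonneg (by positivity) (Int.fract_nonneg _)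
  have hs2 : s < 2 * π / M := by
    rw [hfs]
    calc (2 * π / M) * Int.fract (ω / (2 * π)) < (2 * π / M) * 1 :=
          (mul_lt_mul_iff_right₀ (by positivity)).mpr (Int.fract_lt_one _)
      _ = 2 * π / M := mul_one _
  have hα : α (ω / M) = π / 2 - c * ω + 2 * π * c * (m : ℝ) := by
    have h1 : α (ω / M) = α s := (hper'.sub_int_mul_eq m).symm
    rw [h1, hαval s hs0 hs2, hs, hc]
    field_simp
    ring
  refine ⟨d * m - d * ((M : ℤ) - 1) * K, ?_⟩
  rw [hα, hK, hc, hm]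
  push_cast
  ring
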